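/- Let n = 2m+1 and let (v_i)_i be a d-face of type I with μ_i := v_i - ω_i. Then μ_i(m+1) = d/2 for all i ∈ nℤ ± I (in particular d is even). -/

import Mathlib

/-- The standard vector ω_i ∈ ℤ^n for i = nb + c, 0 ≤ c < n: the first c entries are
-1 - b and the remaining entries are -b (0-indexed via `Fin n`). -/
def omegaVec (n : ℕ) (i : ℤ) : Fin n → ℤ :=
  fun t => (if (t : ℤ) < i % (n : ℤ) then -1 else 0) - i / (n : ℤ)

/-- For a d-face (v_i)_i of type I with μ_i := v_i - ω_i, the middle entry
satisfies μ_i(m+1) = d/2 for all i ∈ nℤ ± I (stated as 2·μ_i(m+1) = d, the middle index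
m+1 being index m in the 0-indexed `Fin n`); in particular d is even. -/
theorem stmt_6 (m n : ℕ) (hn : n = 2*m+1) (I : Finset ℕ) (hI : I.Nonempty)
    (hIm : ∀ i ∈ I, i ≤ m) (d : ℤ)
    (S : Set ℤ) (hS : S = {i : ℤ | ∃ b : ℤ, ∃ c ∈ I, i = n*b + (c:ℤ) ∨ i = n*b - (c:ℤ)})
    (v : ℤ → Fin n → ℤ)
    (hF1 : ∀ i ∈ S, ∀ t : Fin n, v (i + n) t = v i t - 1)
    (hF2 : ∀ i ∈ S, ∀ j ∈ S, i ≤ j → ∀ t : Fin n, v j t ≤ v i t)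
    (hF3 : ∀ i ∈ S, ∀ j ∈ S, (∑ t : Fin n, v i t) - (∑ t : Fin n, v j t) = j - i)
    (hF4 : ∀ i ∈ S, ∀ t : Fin n, v i t + v (-i) t.rev = d) :
    Even d ∧ ∀ i ∈ S,
      2 * (v i ⟨m, by omega⟩ - omegaVec n i ⟨m, by omega⟩) = d := by
  suffices key : ∀ mi : Fin n, (mi : ℕ) = m →
      Even d ∧ ∀ i ∈ S, 2 * (v i mi - omegaVec n i mi) = d by
    exact key ⟨m, by omega⟩ rfl
  intro mi hmival
  have hnz : (n:ℤ) ≠ 0 := by omega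
  have hrevmi : Fin.rev mi = mi := by
    apply Fin.ext
    rw [Fin.val_rev]
    omega
  -- S is closed under adding multiples of n
  have hSadd : ∀ i ∈ S, ∀ b : ℤ, i + n * b ∈ S := by
    intro i hi b
    rw [hS] at hi ⊢
    obtain ⟨b', c, hc, h | h⟩ := hi
    · exact ⟨b' + b, c, hc, Or.inl (by rw [h]; ring)⟩
    · exact ⟨b' + b, c, hc, Or.inr (by rw [h]; ring)⟩
  -- translation of v
  have hv : ∀ i ∈ S, ∀ b : ℤ, ∀ t, v (i + n * b) t = v i t - b := by
    intro i hi b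
    induction b using Int.induction_on with
    | zero => simp
    | succ k ih =>
      intro t
      have h1 := hF1 (i + n*k) (hSadd i hi k) t
      have e : i + n*((k:ℤ)+1) = (i + n*k) + n := by ring
      rw [e, h1, ih t]; ring
    | pred k ih =>
      intro t
      have h1 := hF1 (i + n*(-(k:ℤ)-1)) (hSadd i hi _) t
      have e : (i + n*(-(k:ℤ)-1)) + n = i + n*(-(k:ℤ)) := by ring
      rw [e, ih t] at h1
      omega
  -- emod/ediv computation
  have hmod : ∀ r b : ℤ, 0 ≤ r → r < n → (r + n*b) % n = r ∧ (r + n*b) / n = b := by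
    intro r b h0 h1
    constructor
    · rw [Int.add_mul_emod_self_left, Int.emod_eq_of_lt h0 h1]
    · rw [Int.add_mul_ediv_left r b hnz, Int.ediv_eq_zero_of_lt h0 h1, zero_add]
  have homega : ∀ r b : ℤ, 0 ≤ r → r < n →
      omegaVec n (r + n*b) mi = (if (m:ℤ) < r then -1 else 0) - b := by
    intro r b h0 h1
    obtain ⟨e1, e2⟩ := hmod r b h0 h1
    simp only [omegaVec, e1, e2, hmival]
  -- the c = 0 case
  have hzero : (0:ℤ) ∈ S → 2 * v 0 mi = d := by
    intro h0S
    have h4 := hF4 0 h0S mi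
    rw [hrevmi, neg_zero] at h4
    linarith
  -- the core case
  have hcore : ∀ c : ℕ, c ∈ I → 0 < c →
      2 * v (c:ℤ) mi = d ∧ 2 * v ((n:ℤ) - c) mi = d - 2 := by
    intro c hc hc0
    have hcm := hIm c hc
    have hcS : (c:ℤ) ∈ S := by rw [hS]; exact ⟨0, c, hc, Or.inl (by ring)⟩
    have hncS : ((n:ℤ) - c) ∈ S := by rw [hS]; exact ⟨1, c, hc, Or.inr (by ring)⟩
    have hnegcS : (-(c:ℤ)) ∈ S := by rw [hS]; exact ⟨0, c, hc, Or.inr (by ring)⟩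
    have hb : ∀ t, v ((n:ℤ) - c) t = v (-(c:ℤ)) t - 1 := by
      intro t
      have h1 := hv _ hnegcS 1 t
      have e : (-(c:ℤ) + n*1) = (n:ℤ) - c := by ring
      rw [e] at h1
      exact h1
    have hd1 : ∀ t : Fin n, v (c:ℤ) t + v ((n:ℤ)-c) t.rev = d - 1 := by
      intro t
      have h4 := hF4 (c:ℤ) hcS t
      have := hb t.rev
      linarith
    have hmono1 : ∀ t, v ((n:ℤ)-c) t ≤ v (c:ℤ) t := by
      intro t
      exact hF2 _ hcS _ hncS (by push_cast; omega) t
    have hmono2 : ∀ t, v (c:ℤ) t - 1 ≤ v ((n:ℤ)-c) t := by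
      intro t
      have hcnS : (c:ℤ) + n*1 ∈ S := hSadd _ hcS 1
      have h2 := hF2 _ hncS _ hcnS (by push_cast; omega) t
      have h3 := hv _ hcS 1 t
      linarith
    have hsum2 : ∑ t : Fin n, (v (c:ℤ) t - v ((n:ℤ)-c) t) = (n:ℤ) - 2*c := by
      rw [Finset.sum_sub_distrib]
      have := hF3 _ hcS _ hncS
      linarith
    have hδsym : ∀ t : Fin n, v (c:ℤ) t - v ((n:ℤ)-c) t
        = v (c:ℤ) t.rev - v ((n:ℤ)-c) t.rev := by
      intro t
      have h1 := hd1 t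
      have h2 := hd1 t.rev
      rw [Fin.rev_rev] at h2
      linarith
    -- parity argument in ZMod 2
    have hz : ∑ t ∈ Finset.univ.erase mi,
        ((v (c:ℤ) t - v ((n:ℤ)-c) t : ℤ) : ZMod 2) = 0 := by
      apply Finset.sum_involution (fun t _ => t.rev)
      · intro t ht
        rw [← hδsym t, ← Int.cast_add]
        exact (ZMod.intCast_zmod_eq_zero_iff_dvd _ 2).mpr ⟨_, (two_mul _).symm⟩
      · intro t ht _
        simp only [Finset.mem_erase] at ht
        intro h
        apply ht.1
        apply Fin.ext
        have := congrArg Fin.val h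
        rw [Fin.val_rev] at this
        omega
      · intro t ht
        exact Fin.rev_rev t
      · intro t ht
        simp only [Finset.mem_erase, Finset.mem_univ, and_true] at ht ⊢
        intro h
        apply ht
        rw [← Fin.rev_rev t, h, hrevmi]
    have hsplit := Finset.add_sum_erase Finset.univ
      (fun t => ((v (c:ℤ) t - v ((n:ℤ)-c) t : ℤ) : ZMod 2)) (Finset.mem_univ mi)
    rw [hz, add_zero] at hsplit
    have hcast : ((v (c:ℤ) mi - v ((n:ℤ)-c) mi : ℤ) : ZMod 2) = (((n:ℤ) - 2*c : ℤ) : ZMod 2) := by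
      have hsplit' : ((v (c:ℤ) mi - v ((n:ℤ)-c) mi : ℤ) : ZMod 2)
          = ∑ t : Fin n, ((v (c:ℤ) t - v ((n:ℤ)-c) t : ℤ) : ZMod 2) := hsplit
      rw [hsplit', ← hsum2]
      push_cast
      rfl
    have hmod2 := (ZMod.intCast_eq_intCast_iff _ _ _).mp hcast
    have hmod2' : (v (c:ℤ) mi - v ((n:ℤ)-c) mi) % 2 = ((n:ℤ) - 2*c) % 2 := hmod2
    have hnn : (n:ℤ) = 2*m+1 := by exact_mod_cast congrArg (Nat.cast : ℕ → ℤ) hn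
    have h1 := hmono1 mi
    have h2 := hmono2 mi
    have hδ : v (c:ℤ) mi - v ((n:ℤ)-c) mi = 1 := by omega
    have h3 := hd1 mi
    rw [hrevmi] at h3
    omega
  constructor
  · obtain ⟨c, hc⟩ := hI
    rcases Nat.eq_zero_or_pos c with h0 | hpos
    · have h0S : (0:ℤ) ∈ S := by
        rw [hS]; exact ⟨0, c, hc, Or.inl (by rw [h0]; simp)⟩
      exact ⟨v 0 mi, by have := hzero h0S; linarith⟩
    · exact ⟨v (c:ℤ) mi, by have := (hcore c hc hpos).1; linarith⟩
  · intro i hi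
    have hi' := hi
    rw [hS] at hi'
    obtain ⟨b, c, hc, h | h⟩ := hi'
    · rcases Nat.eq_zero_or_pos c with h0 | hpos
      · subst h0
        have h0S : (0:ℤ) ∈ S := by rw [hS]; exact ⟨0, 0, hc, Or.inl (by simp)⟩
        have e : i = 0 + (n:ℤ)*b := by rw [h]; push_cast; ring
        rw [e, hv 0 h0S b, homega 0 b le_rfl (by omega)]
        rw [if_neg (by omega)]
        have := hzero h0S
        linarith
      · have hcm := hIm c hc
        have hcS : (c:ℤ) ∈ S := by rw [hS]; exact ⟨0, c, hc, Or.inl (by ring)⟩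
        have e : i = (c:ℤ) + (n:ℤ)*b := by rw [h]; ring
        rw [e, hv _ hcS b, homega c b (by omega) (by push_cast; omega)]
        rw [if_neg (by push_cast; omega)]
        have := (hcore c hc hpos).1
        linarith
    · rcases Nat.eq_zero_or_pos c with h0 | hpos
      · subst h0
        have h0S : (0:ℤ) ∈ S := by rw [hS]; exact ⟨0, 0, hc, Or.inl (by simp)⟩
        have e : i = 0 + (n:ℤ)*b := by rw [h]; push_cast; ring
        rw [e, hv 0 h0S b, homega 0 b le_rfl (by omega)]
        rw [if_neg (by omega)]
        have := hzero h0S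
        linarith
      · have hcm := hIm c hc
        have hncS : ((n:ℤ) - c) ∈ S := by rw [hS]; exact ⟨1, c, hc, Or.inr (by ring)⟩
        have e : i = ((n:ℤ) - c) + (n:ℤ)*(b-1) := by rw [h]; ring
        rw [e, hv _ hncS (b-1), homega ((n:ℤ)-c) (b-1) (by push_cast; omega) (by push_cast; omega)]
        rw [if_pos (by push_cast; omega)]
        have := (hcore c hc hpos).2
        linarith
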